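/- Let (Θ̂₁,…,Θ̂_T) be any tuple of p×p real matrices, and suppose there exist real numbers Ê_{uv,1t} (1 ≤ u ≠ v ≤ p, 1 ≤ t ≤ T) and p×p real matrices Ê_{2t} (1 ≤ t ≤ T) satisfying: Ê_{uv,1t} = sgn(Θ̂_{uv,t}) whenever Θ̂_{uv,t} ≠ 0 and Ê_{uv,1t} ∈ [−1,1] otherwise; Ê_{21} = 0; for 2 ≤ t ≤ T, Ê_{2t} = (Θ̂_t − Θ̂_{t−1})/‖Θ̂_t − Θ̂_{t−1}‖_F if Θ̂_t ≠ Θ̂_{t−1} and ‖Ê_{2t}‖_F ≤ 1 if Θ̂_t = Θ̂_{t−1}; and for every 1 ≤ t ≤ T, (1/T)·∑_{r=t}^{T} (Θ̂_r − X_r X_rᵀ) + λ₁·M_t + λ₂·ξ_{2t}·Ê_{2t} = 0, where M_t is the p×p matrix with (u,v) entry ∑_{r=t}^{T} ξ_{uv,1r}·Ê_{uv,1r} for u ≠ v and 0 on the diagonal. Then G_a(Θ̂₁,…,Θ̂_T) ≤ G_a(Θ₁,…,Θ_T) for every tuple (Θ₁,…,Θ_T) of p×p real matrices; that is, (Θ̂_t)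 is a global minimizer of G_a. -/

import Mathlib

open Matrix Finset

/-- Frobenius norm of a real `p × p` matrix. -/
noncomputable def frob {p : ℕ} (A : Matrix (Fin p) (Fin p) ℝ) : ℝ :=
  Real.sqrt (∑ u, ∑ v, (A u v) ^ 2)

namespace Stmt6Aux

noncomputable def ip {p : ℕ} (A B : Matrix (Fin p) (Fin p) ℝ) : ℝ :=
  ∑ u, ∑ v, A u v * B u v

variable {p : ℕ}

lemma ip_comm (A B : Matrix (Fin p) (Fin p) ℝ) : ip A B = ip B A := by
  unfold ip
  exact Finset.sum_congr rfl fun u _ => Finset.sum_congr rfl fun v _ => mul_comm _ _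

lemma ip_add_left (A B C : Matrix (Fin p) (Fin p) ℝ) :
    ip (A + B) C = ip A C + ip B C := by
  simp [ip, Matrix.add_apply, add_mul, Finset.sum_add_distrib]

lemma ip_sub_left (A B C : Matrix (Fin p) (Fin p) ℝ) :
    ip (A - B) C = ip A C - ip B C := by
  simp [ip, Matrix.sub_apply, sub_mul, Finset.sum_sub_distrib]

lemma ip_sub_right (A B C : Matrix (Fin p) (Fin p) ℝ) :
    ip A (B - C) = ip A B - ip A C := by
  simp [ip, Matrix.sub_apply, mul_sub, Finset.sum_sub_distrib]

lemma ip_smul_left (c : ℝ) (A B : Matrix (Fin p) (Fin p) ℝ) :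
    ip (c • A) B = c * ip A B := by
  simp [ip, Matrix.smul_apply, smul_eq_mul, Finset.mul_sum, mul_assoc]

lemma ip_zero_left (A : Matrix (Fin p) (Fin p) ℝ) : ip 0 A = 0 := by simp [ip]

lemma ip_self_nonneg (A : Matrix (Fin p) (Fin p) ℝ) : 0 ≤ ip A A :=
  Finset.sum_nonneg fun u _ => Finset.sum_nonneg fun v _ => mul_self_nonneg _

lemma frob_eq (A : Matrix (Fin p) (Fin p) ℝ) : frob A = Real.sqrt (ip A A) := by
  simp [frob, ip, pow_two]

lemma frob_nonneg (A : Matrix (Fin p) (Fin p) ℝ) : 0 ≤ frob A := Real.sqrt_nonneg _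

lemma ip_self_eq (A : Matrix (Fin p) (Fin p) ℝ) : ip A A = frob A ^ 2 := by
  rw [frob_eq, Real.sq_sqrt (ip_self_nonneg A)]

lemma frob_pos {A : Matrix (Fin p) (Fin p) ℝ} (h : A ≠ 0) : 0 < frob A := by
  rcases (frob_nonneg A).lt_or_eq with h' | h'
  · exact h'
  · exfalso; apply h
    have h1 : ∑ u, ∑ v, (A u v) ^ 2 = 0 :=
      le_antisymm (Real.sqrt_eq_zero'.mp h'.symm) (by positivity)
    ext u v
    have h2 := (Finset.sum_eq_zero_iff_of_nonneg
      (fun u _ => Finset.sum_nonneg fun v _ => sq_nonneg (A u v))).mp h1 u (Finset.mem_univ u)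
    have h3 := (Finset.sum_eq_zero_iff_of_nonneg
      (fun v _ => sq_nonneg (A u v))).mp h2 v (Finset.mem_univ v)
    simpa using sq_eq_zero_iff.mp h3

lemma ip_le_frob (A B : Matrix (Fin p) (Fin p) ℝ) : ip A B ≤ frob A * frob B := by
  have key : (ip A B) ^ 2 ≤ ip A A * ip B B := by
    have h1 : ∀ (C D : Matrix (Fin p) (Fin p) ℝ),
        ip C D = ∑ x : Fin p × Fin p, C x.1 x.2 * D x.1 x.2 := by
      intro C D; exact (Fintype.sum_prod_type (fun x : Fin p × Fin p => C x.1 x.2 * D x.1 x.2)).symm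
    rw [h1, h1, h1]
    have h2 := Finset.sum_mul_sq_le_sq_mul_sq Finset.univ
      (fun x : Fin p × Fin p => A x.1 x.2) (fun x : Fin p × Fin p => B x.1 x.2)
    calc (∑ x : Fin p × Fin p, A x.1 x.2 * B x.1 x.2) ^ 2 ≤ _ := h2
      _ = (∑ x : Fin p × Fin p, A x.1 x.2 * A x.1 x.2) *
            ∑ x : Fin p × Fin p, B x.1 x.2 * B x.1 x.2 := by simp [pow_two]
  rcases le_or_gt (ip A B) 0 with h | h
  · exact h.trans (mul_nonneg (frob_nonneg A) (frob_nonneg B))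
  · rw [frob_eq, frob_eq, ← Real.sqrt_mul (ip_self_nonneg A)]
    exact (Real.le_sqrt h.le (mul_nonneg (ip_self_nonneg A) (ip_self_nonneg B))).mpr key

lemma frob_subgrad {Z Y E : Matrix (Fin p) (Fin p) ℝ}
    (h1 : Z ≠ 0 → E = (frob Z)⁻¹ • Z) (h2 : Z = 0 → frob E ≤ 1) :
    frob Z + ip E (Y - Z) ≤ frob Y := by
  by_cases hz : Z = 0
  · subst hz
    have hE := h2 rfl
    have h3 : ip E Y ≤ frob E * frob Y := ip_le_frob E Y
    have h4 : frob (0 : Matrix (Fin p) (Fin p) ℝ) = 0 := by simp [frob]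
    have h5 := frob_nonneg Y
    have h6 := frob_nonneg E
    rw [h4, sub_zero, zero_add]
    nlinarith
  · have hfz := frob_pos hz
    rw [h1 hz, ip_smul_left, ip_sub_right, ip_self_eq]
    have h4 := ip_le_frob Z Y
    have e1 : frob Z + (frob Z)⁻¹ * (ip Z Y - frob Z ^ 2) = (frob Z)⁻¹ * ip Z Y := by
      field_simp; ring
    rw [e1]
    calc (frob Z)⁻¹ * ip Z Y ≤ (frob Z)⁻¹ * (frob Z * frob Y) :=
          mul_le_mul_of_nonneg_left h4 (inv_nonneg.mpr hfz.le)
      _ = frob Y := by field_simp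

lemma abs_subgrad {z x e : ℝ} (h1 : z ≠ 0 → e = Real.sign z)
    (h2 : z = 0 → -1 ≤ e ∧ e ≤ 1) :
    |z| + e * (x - z) ≤ |x| := by
  by_cases hz : z = 0
  · subst hz
    obtain ⟨ha, hb⟩ := h2 rfl
    simp only [abs_zero, sub_zero, zero_add]
    rcases le_or_gt 0 x with h | h
    · nlinarith [le_abs_self x]
    · nlinarith [neg_abs_le x]
  · rw [h1 hz]
    rcases lt_trichotomy z 0 with h | h | h
    · rw [Real.sign_of_neg h, abs_of_neg h]
      linarith [neg_abs_le x]
    · exact absurd h hz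
    · rw [Real.sign_of_pos h, abs_of_pos h]
      linarith [le_abs_self x]

lemma quad_subgrad (Θ Z S : Matrix (Fin p) (Fin p) ℝ) :
    ip Z Z - ip S Z - ip Z S + 2 * ip (Z - S) (Θ - Z) ≤ ip Θ Θ - ip S Θ - ip Θ S := by
  have h := ip_self_nonneg (Θ - Z)
  have e1 : ip (Θ - Z) (Θ - Z) = ip Θ Θ - ip Z Θ - (ip Θ Z - ip Z Z) := by
    rw [ip_sub_left, ip_sub_right, ip_sub_right]; ring
  have e2 : ip (Z - S) (Θ - Z) = ip Z Θ - ip Z Z - (ip S Θ - ip S Z) := by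
    rw [ip_sub_left, ip_sub_right, ip_sub_right]
  have c1 := ip_comm Θ S
  have c2 := ip_comm Z S
  have c3 := ip_comm Z Θ
  linarith

lemma trace_eq (A B : Matrix (Fin p) (Fin p) ℝ) : (Aᵀ * B).trace = ip A B := by
  rw [Matrix.trace]
  simp only [Matrix.diag_apply, Matrix.mul_apply, Matrix.transpose_apply]
  rw [Finset.sum_comm]
  rfl

end Stmt6Aux

/-- The adaptive GFlsL objective, with time indices `t = 1, …, T`, entrywise LASSO
weights `ξ1 u v t` (for `u ≠ v`) and fused weights `ξ2 t`. -/
noncomputable def gflslA (p T : ℕ) (X : ℕ → Fin p → ℝ) (lam1 lam2 : ℝ)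
    (ξ1 : Fin p → Fin p → ℕ → ℝ) (ξ2 : ℕ → ℝ)
    (Θ : ℕ → Matrix (Fin p) (Fin p) ℝ) : ℝ :=
  (1 / (2 * (T : ℝ))) *
      ∑ t ∈ Finset.Icc 1 T,
        ((Θ t)ᵀ * Θ t - (Matrix.vecMulVec (X t) (X t))ᵀ * Θ t
          - (Θ t)ᵀ * Matrix.vecMulVec (X t) (X t)).trace
    + lam1 * ∑ t ∈ Finset.Icc 1 T, ∑ u, ∑ v,
        (if u ≠ v then ξ1 u v t * |Θ t u v| else 0)
    + lam2 * ∑ t ∈ Finset.Icc 2 T, ξ2 t * frob (Θ t - Θ (t - 1))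

open Stmt6Aux

/-- if a tuple satisfies the adaptive subgradient (KKT) conditions, then it
is a global minimizer of the adaptive GFlsL objective over all tuples of matrices. -/
theorem stmt6 (p T : ℕ) (hp : 1 ≤ p) (hT : 1 ≤ T)
    (X : ℕ → Fin p → ℝ) (lam1 lam2 : ℝ) (hlam1 : 0 ≤ lam1) (hlam2 : 0 < lam2)
    (ξ1 : Fin p → Fin p → ℕ → ℝ)
    (hξ1 : ∀ u v : Fin p, u ≠ v → ∀ t ∈ Finset.Icc 1 T, 0 ≤ ξ1 u v t)
    (ξ2 : ℕ → ℝ) (hξ2 : ∀ t ∈ Finset.Icc 2 T, 0 ≤ ξ2 t) (hξ21 : ξ2 1 = 0)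
    (Θhat : ℕ → Matrix (Fin p) (Fin p) ℝ)
    (E1 : Fin p → Fin p → ℕ → ℝ) (E2 : ℕ → Matrix (Fin p) (Fin p) ℝ)
    (hE1 : ∀ t ∈ Finset.Icc 1 T, ∀ u v : Fin p, u ≠ v →
      (Θhat t u v ≠ 0 → E1 u v t = Real.sign (Θhat t u v)) ∧
      (Θhat t u v = 0 → -1 ≤ E1 u v t ∧ E1 u v t ≤ 1))
    (hE21 : E2 1 = 0)
    (hE2 : ∀ t ∈ Finset.Icc 2 T,
      (Θhat t ≠ Θhat (t - 1) →
        E2 t = (frob (Θhat t - Θhat (t - 1)))⁻¹ • (Θhat t - Θhat (t - 1))) ∧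
      (Θhat t = Θhat (t - 1) → frob (E2 t) ≤ 1))
    (hstat : ∀ t ∈ Finset.Icc 1 T,
      (1 / (T : ℝ)) • (∑ r ∈ Finset.Icc t T,
          (Θhat r - Matrix.vecMulVec (X r) (X r)))
      + lam1 • (Matrix.of fun u v =>
          if u = v then (0 : ℝ) else ∑ r ∈ Finset.Icc t T, ξ1 u v r * E1 u v r)
      + (lam2 * ξ2 t) • E2 t = 0) :
    ∀ Θ : ℕ → Matrix (Fin p) (Fin p) ℝ,
      gflslA p T X lam1 lam2 ξ1 ξ2 Θhat ≤ gflslA p T X lam1 lam2 ξ1 ξ2 Θ := by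
  intro Θ
  classical
  have hT0 : (0 : ℝ) < (T : ℝ) := by exact_mod_cast hT
  have hT0' : (T : ℝ) ≠ 0 := hT0.ne'
  set C : ℕ → Matrix (Fin p) (Fin p) ℝ :=
    fun t => if t ≤ T then (lam2 * ξ2 t) • E2 t else 0 with hCdef
  set N : ℕ → Matrix (Fin p) (Fin p) ℝ :=
    fun t => Matrix.of (fun u v => if u = v then (0:ℝ) else ξ1 u v t * E1 u v t) with hNdef
  -- real-valued sum splitting
  have icc_succ : ∀ t : ℕ, Finset.Icc (t+1) T = Finset.Ioc t T := by
    intro t; ext x; simp only [Finset.mem_Icc, Finset.mem_Ioc]; omega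
  have sum_split : ∀ (t : ℕ), t ≤ T → ∀ (f : ℕ → ℝ),
      ∑ r ∈ Finset.Icc t T, f r = f t + ∑ r ∈ Finset.Icc (t+1) T, f r := by
    intro t ht f
    rw [Finset.Icc_eq_cons_Ioc ht, Finset.sum_cons, icc_succ]
  -- Step A: differenced stationarity
  have stepA : ∀ t, 1 ≤ t → t ≤ T →
      (1/(T:ℝ)) • (Θhat t - Matrix.vecMulVec (X t) (X t)) + lam1 • N t
        = C (t+1) - C t := by
    intro t h1 h2
    have hCt : C t = (lam2 * ξ2 t) • E2 t := by simp only [hCdef]; rw [if_pos h2]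
    have a := hstat t (Finset.mem_Icc.mpr ⟨h1, h2⟩)
    by_cases hlt : t + 1 ≤ T
    · have hCt1 : C (t+1) = (lam2 * ξ2 (t+1)) • E2 (t+1) := by
        simp only [hCdef]; rw [if_pos hlt]
      have b := hstat (t+1) (Finset.mem_Icc.mpr ⟨by omega, hlt⟩)
      rw [hCt, hCt1]
      ext u v
      have au := congrFun (congrFun a u) v
      have bu := congrFun (congrFun b u) v
      simp only [Matrix.add_apply, Matrix.smul_apply, Matrix.sub_apply, Matrix.sum_apply,
        Matrix.of_apply, Matrix.zero_apply, smul_eq_mul, hNdef] at au bu ⊢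
      rw [sum_split t h2 (fun r => Θhat r u v - Matrix.vecMulVec (X r) (X r) u v)] at au
      by_cases huv : u = v
      · simp only [if_pos huv] at au bu ⊢
        linarith
      · simp only [if_neg huv] at au bu ⊢
        rw [sum_split t h2 (fun r => ξ1 u v r * E1 u v r)] at au
        linarith
    · have htT : t = T := by omega
      have hCt1 : C (t+1) = 0 := by simp only [hCdef]; rw [if_neg (by omega)]
      have hsing : Finset.Icc t T = {t} := by ext x; simp only [Finset.mem_Icc, Finset.mem_singleton]; omega
      rw [hCt, hCt1]
      ext u v
      have au := congrFun (congrFun a u) v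
      simp only [Matrix.add_apply, Matrix.smul_apply, Matrix.sub_apply, Matrix.sum_apply,
        Matrix.of_apply, Matrix.zero_apply, smul_eq_mul, hNdef, hsing,
        Finset.sum_singleton] at au ⊢
      by_cases huv : u = v
      · simp only [if_pos huv] at au ⊢
        linarith
      · simp only [if_neg huv] at au ⊢
        linarith
  -- C at endpoints
  have hC1 : C 1 = 0 := by
    simp only [hCdef]; rw [if_pos hT, hξ21, mul_zero, zero_smul]
  have hCT1 : C (T+1) = 0 := by simp only [hCdef]; rw [if_neg (by omega)]
  -- (a) quadratic part
  have hq : ∀ t ∈ Finset.Icc 1 T,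
      ((Θhat t)ᵀ * Θhat t - (Matrix.vecMulVec (X t) (X t))ᵀ * Θhat t
          - (Θhat t)ᵀ * Matrix.vecMulVec (X t) (X t)).trace
        + 2 * ip (Θhat t - Matrix.vecMulVec (X t) (X t)) (Θ t - Θhat t)
      ≤ ((Θ t)ᵀ * Θ t - (Matrix.vecMulVec (X t) (X t))ᵀ * Θ t
          - (Θ t)ᵀ * Matrix.vecMulVec (X t) (X t)).trace := by
    intro t _
    simp only [Matrix.trace_sub, trace_eq]
    exact quad_subgrad (Θ t) (Θhat t) (Matrix.vecMulVec (X t) (X t))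
  have F1 : (1 / (2 * (T:ℝ))) * ∑ t ∈ Finset.Icc 1 T,
        ((Θhat t)ᵀ * Θhat t - (Matrix.vecMulVec (X t) (X t))ᵀ * Θhat t
          - (Θhat t)ᵀ * Matrix.vecMulVec (X t) (X t)).trace
      + ∑ t ∈ Finset.Icc 1 T,
          (1/(T:ℝ)) * ip (Θhat t - Matrix.vecMulVec (X t) (X t)) (Θ t - Θhat t)
      ≤ (1 / (2 * (T:ℝ))) * ∑ t ∈ Finset.Icc 1 T,
        ((Θ t)ᵀ * Θ t - (Matrix.vecMulVec (X t) (X t))ᵀ * Θ t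
          - (Θ t)ᵀ * Matrix.vecMulVec (X t) (X t)).trace := by
    have hsum := Finset.sum_le_sum hq
    rw [Finset.sum_add_distrib] at hsum
    have hc : (0:ℝ) ≤ 1 / (2 * (T:ℝ)) := by positivity
    have h2 := mul_le_mul_of_nonneg_left hsum hc
    rw [mul_add] at h2
    have he : (1 / (2 * (T:ℝ))) * ∑ t ∈ Finset.Icc 1 T,
        2 * ip (Θhat t - Matrix.vecMulVec (X t) (X t)) (Θ t - Θhat t)
        = ∑ t ∈ Finset.Icc 1 T,
          (1/(T:ℝ)) * ip (Θhat t - Matrix.vecMulVec (X t) (X t)) (Θ t - Θhat t) := by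
      rw [Finset.mul_sum]
      refine Finset.sum_congr rfl fun t _ => ?_
      field_simp
    linarith [he.le, he.ge]
  -- (b) lasso part
  have hl : ∀ t ∈ Finset.Icc 1 T,
      (∑ u, ∑ v, (if u ≠ v then ξ1 u v t * |Θhat t u v| else 0))
        + ip (N t) (Θ t - Θhat t)
      ≤ ∑ u, ∑ v, (if u ≠ v then ξ1 u v t * |Θ t u v| else 0) := by
    intro t ht
    rw [ip, ← Finset.sum_add_distrib]
    refine Finset.sum_le_sum fun u _ => ?_
    rw [← Finset.sum_add_distrib]
    refine Finset.sum_le_sum fun v _ => ?_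
    by_cases huv : u = v
    · simp [huv, hNdef]
    · have hE := hE1 t ht u v huv
      have habs := abs_subgrad (z := Θhat t u v) (x := Θ t u v) (e := E1 u v t) hE.1 hE.2
      have hx := hξ1 u v huv t ht
      have hmul := mul_le_mul_of_nonneg_left habs hx
      simp only [hNdef, Matrix.of_apply, Matrix.sub_apply, if_neg huv,
        if_pos (show u ≠ v from huv), ne_eq]
      nlinarith [hmul]
  have F2 : lam1 * ∑ t ∈ Finset.Icc 1 T, ∑ u, ∑ v,
        (if u ≠ v then ξ1 u v t * |Θhat t u v| else 0)
      + ∑ t ∈ Finset.Icc 1 T, lam1 * ip (N t) (Θ t - Θhat t)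
      ≤ lam1 * ∑ t ∈ Finset.Icc 1 T, ∑ u, ∑ v,
        (if u ≠ v then ξ1 u v t * |Θ t u v| else 0) := by
    have hsum := Finset.sum_le_sum hl
    rw [Finset.sum_add_distrib] at hsum
    have h2 := mul_le_mul_of_nonneg_left hsum hlam1
    rw [mul_add] at h2
    have he : lam1 * ∑ t ∈ Finset.Icc 1 T, ip (N t) (Θ t - Θhat t)
        = ∑ t ∈ Finset.Icc 1 T, lam1 * ip (N t) (Θ t - Θhat t) := Finset.mul_sum _ _ _
    linarith [he.le, he.ge]
  -- (c) fused part
  have hf : ∀ t ∈ Finset.Icc 2 T,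
      lam2 * (ξ2 t * frob (Θhat t - Θhat (t-1)))
        + ip (C t) ((Θ t - Θ (t-1)) - (Θhat t - Θhat (t-1)))
      ≤ lam2 * (ξ2 t * frob (Θ t - Θ (t-1))) := by
    intro t ht
    have ht2 := Finset.mem_Icc.mp ht
    have hCt : C t = (lam2 * ξ2 t) • E2 t := by simp only [hCdef]; rw [if_pos ht2.2]
    rw [hCt, ip_smul_left]
    have hsub : frob (Θhat t - Θhat (t-1))
        + ip (E2 t) ((Θ t - Θ (t-1)) - (Θhat t - Θhat (t-1)))
        ≤ frob (Θ t - Θ (t-1)) := by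
      refine frob_subgrad ?_ ?_
      · intro hne
        exact (hE2 t ht).1 (sub_ne_zero.mp hne)
      · intro h0
        exact (hE2 t ht).2 (sub_eq_zero.mp h0)
    have hnn : 0 ≤ lam2 * ξ2 t := mul_nonneg hlam2.le (hξ2 t ht)
    nlinarith [mul_le_mul_of_nonneg_left hsub hnn]
  have hext : ∑ t ∈ Finset.Icc 1 T,
        ip (C t) ((Θ t - Θ (t-1)) - (Θhat t - Θhat (t-1)))
      = ∑ t ∈ Finset.Icc 2 T,
        ip (C t) ((Θ t - Θ (t-1)) - (Θhat t - Θhat (t-1))) := by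
    rw [sum_split 1 hT (fun t => ip (C t) ((Θ t - Θ (t-1)) - (Θhat t - Θhat (t-1))))]
    rw [hC1, ip_zero_left, zero_add]
  have F3 : lam2 * ∑ t ∈ Finset.Icc 2 T, ξ2 t * frob (Θhat t - Θhat (t - 1))
      + ∑ t ∈ Finset.Icc 1 T,
          ip (C t) ((Θ t - Θ (t-1)) - (Θhat t - Θhat (t-1)))
      ≤ lam2 * ∑ t ∈ Finset.Icc 2 T, ξ2 t * frob (Θ t - Θ (t - 1)) := by
    have hsum := Finset.sum_le_sum hf
    rw [Finset.sum_add_distrib] at hsum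
    rw [hext, Finset.mul_sum, Finset.mul_sum]
    exact hsum
  -- the exchanged sum is zero
  have key : ∀ t ∈ Finset.Icc 1 T,
      (1/(T:ℝ)) * ip (Θhat t - Matrix.vecMulVec (X t) (X t)) (Θ t - Θhat t)
        + lam1 * ip (N t) (Θ t - Θhat t)
        + ip (C t) ((Θ t - Θ (t-1)) - (Θhat t - Θhat (t-1)))
      = ip (C (t+1)) (Θ t - Θhat t) - ip (C t) (Θ (t-1) - Θhat (t-1)) := by
    intro t ht
    obtain ⟨h1, h2⟩ := Finset.mem_Icc.mp ht
    have hA := stepA t h1 h2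
    have e1 : (1/(T:ℝ)) * ip (Θhat t - Matrix.vecMulVec (X t) (X t)) (Θ t - Θhat t)
        + lam1 * ip (N t) (Θ t - Θhat t)
        = ip (C (t+1) - C t) (Θ t - Θhat t) := by
      rw [← hA, ip_add_left, ip_smul_left, ip_smul_left]
    have e2 : (Θ t - Θ (t-1)) - (Θhat t - Θhat (t-1))
        = (Θ t - Θhat t) - (Θ (t-1) - Θhat (t-1)) := by abel
    rw [e1, e2]
    rw [show ip (C (t+1) - C t) (Θ t - Θhat t)
          = ip (C (t+1)) (Θ t - Θhat t) - ip (C t) (Θ t - Θhat t) from ip_sub_left _ _ _,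
        show ip (C t) ((Θ t - Θhat t) - (Θ (t-1) - Θhat (t-1)))
          = ip (C t) (Θ t - Θhat t) - ip (C t) (Θ (t-1) - Θhat (t-1)) from ip_sub_right _ _ _]
    ring
  have F4 : ∑ t ∈ Finset.Icc 1 T,
      ((1/(T:ℝ)) * ip (Θhat t - Matrix.vecMulVec (X t) (X t)) (Θ t - Θhat t)
        + lam1 * ip (N t) (Θ t - Θhat t)
        + ip (C t) ((Θ t - Θ (t-1)) - (Θhat t - Θhat (t-1)))) = 0 := by
    rw [show (∑ t ∈ Finset.Icc 1 T,
        ((1/(T:ℝ)) * ip (Θhat t - Matrix.vecMulVec (X t) (X t)) (Θ t - Θhat t)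
          + lam1 * ip (N t) (Θ t - Θhat t)
          + ip (C t) ((Θ t - Θ (t-1)) - (Θhat t - Θhat (t-1)))))
        = ∑ t ∈ Finset.Icc 1 T,
          (ip (C (t+1)) (Θ t - Θhat t) - ip (C t) (Θ (t-1) - Θhat (t-1)))
      from Finset.sum_congr rfl key]
    have hIco : Finset.Icc 1 T = Finset.Ico 1 (T+1) := by
      ext x; simp only [Finset.mem_Icc, Finset.mem_Ico]; omega
    rw [hIco, Finset.sum_Ico_eq_sum_range]
    simp only [Nat.add_sub_cancel]
    rw [show (∑ i ∈ Finset.range T,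
        (ip (C (1 + i + 1)) (Θ (1 + i) - Θhat (1 + i))
          - ip (C (1 + i)) (Θ (1 + i - 1) - Θhat (1 + i - 1))))
        = ∑ i ∈ Finset.range T,
          ((fun j => ip (C (j+1)) (Θ j - Θhat j)) (i+1)
            - (fun j => ip (C (j+1)) (Θ j - Θhat j)) i)
      from Finset.sum_congr rfl (by
        intro i _
        have e : 1 + i = i + 1 := by omega
        simp only [e, Nat.add_sub_cancel])]
    rw [Finset.sum_range_sub (fun j => ip (C (j+1)) (Θ j - Θhat j))]
    simp only [zero_add, hCT1, hC1, ip_zero_left, sub_zero]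
  -- combine
  rw [Finset.sum_add_distrib, Finset.sum_add_distrib] at F4
  simp only [gflslA]
  linarith [F1, F2, F3, F4]
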